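/- If c2(t) → c2* > 0 as t → ∞ and h solves h' = -γ1 h c2(t) + c2(t)/(1 + c2(t)) with γ1 > 0, then h(t) → 1/(γ1(1 + c2*)) as t → ∞. -/
import Mathlib

open Filter Topology Set

/-- Key decay lemma: if `u` is differentiable with derivative `d`, `u` is bounded below,
and `d t ≤ -κ < 0` whenever `u t ≥ ε`, then eventually `u t ≤ ε`. -/
lemma decay_aux (u d : ℝ → ℝ) (T κ ε B : ℝ) (hκ : 0 < κ)
    (hder : ∀ t, T ≤ t → HasDerivAt u (d t) t)
    (hdec : ∀ t, T ≤ t → ε ≤ u t → d t ≤ -κ)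
    (hB : ∀ t, T ≤ t → B ≤ u t) :
    ∀ᶠ t in atTop, u t ≤ ε := by
  by_cases hcase : ∃ t₁, T ≤ t₁ ∧ u t₁ ≤ ε
  · obtain ⟨t₁, ht₁T, ht₁⟩ := hcase
    filter_upwards [eventually_ge_atTop t₁] with t₂ ht₂
    by_contra hlt
    push_neg at hlt
    set S : Set ℝ := {t | t ∈ Icc t₁ t₂ ∧ u t ≤ ε} with hS
    have hne : t₁ ∈ S := ⟨⟨le_refl _, ht₂⟩, ht₁⟩
    have hbddS : BddAbove S := ⟨t₂, fun x hx => hx.1.2⟩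
    set s := sSup S with hs
    have hs1 : t₁ ≤ s := le_csSup hbddS hne
    have hs2 : s ≤ t₂ := csSup_le ⟨t₁, hne⟩ (fun x hx => hx.1.2)
    have hsT : T ≤ s := ht₁T.trans hs1
    have hsc : s ∈ closure S := csSup_mem_closure ⟨t₁, hne⟩ hbddS
    have hus : u s ≤ ε := by
      have h1 : ContinuousWithinAt u S s := ((hder s hsT).continuousAt).continuousWithinAt
      have h2 : (𝓝[S] s).NeBot := mem_closure_iff_nhdsWithin_neBot.mp hsc
      exact le_of_tendsto h1 (eventually_nhdsWithin_of_forall (fun x hx => hx.2))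
    have hst₂ : s < t₂ := by
      rcases lt_or_eq_of_le hs2 with h | h
      · exact h
      · exfalso; rw [h] at hus; linarith
    have hgt : ∀ t ∈ Ioc s t₂, ε < u t := by
      intro t ht
      by_contra hle
      push_neg at hle
      exact absurd (le_csSup hbddS ⟨⟨hs1.trans ht.1.le, ht.2⟩, hle⟩) (not_le.mpr ht.1)
    have hanti : StrictAntiOn u (Icc s t₂) := by
      apply strictAntiOn_of_deriv_neg (convex_Icc s t₂)
      · intro x hx
        exact ((hder x (hsT.trans hx.1)).continuousAt).continuousWithinAt
      · intro x hx
        rw [interior_Icc] at hx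
        have hxT : T ≤ x := hsT.trans hx.1.le
        rw [(hder x hxT).deriv]
        have hε : ε ≤ u x := (hgt x ⟨hx.1, hx.2.le⟩).le
        linarith [hdec x hxT hε]
    have := hanti (left_mem_Icc.mpr hst₂.le) (right_mem_Icc.mpr hst₂.le) hst₂
    linarith
  · push_neg at hcase
    exfalso
    have hall : ∀ t, T ≤ t → d t ≤ -κ := fun t ht => hdec t ht (hcase t ht).le
    have hD : ∀ x, T ≤ x → HasDerivAt (fun t => u t + κ * t) (d x + κ) x := by
      intro x hx
      have h2 : HasDerivAt (fun t : ℝ => κ * t) κ x := by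
        simpa using (hasDerivAt_id x).const_mul κ
      exact (hder x hx).add h2
    have hanti : AntitoneOn (fun t => u t + κ * t) (Ici T) := by
      refine antitoneOn_of_deriv_nonpos (convex_Ici T) ?_ ?_ ?_
      · intro x hx
        exact ((hD x hx).continuousAt).continuousWithinAt
      · intro x hx
        rw [interior_Ici] at hx
        exact ((hD x hx.le).differentiableAt).differentiableWithinAt
      · intro x hx
        rw [interior_Ici] at hx
        rw [(hD x hx.le).deriv]
        linarith [hall x hx.le]
    set t := T + (u T - B) / κ + 1 with ht
    have hdivpos : 0 ≤ (u T - B) / κ := div_nonneg (by linarith [hB T le_rfl]) hκ.le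
    have htT : T ≤ t := by rw [ht]; linarith
    have hmono := hanti (mem_Ici.mpr le_rfl) (mem_Ici.mpr htT) htT
    simp only at hmono
    have hfield : κ * ((u T - B) / κ) = u T - B := by
      field_simp
    have hBt := hB t htT
    rw [ht] at hmono
    nlinarith

/-- Asymptotic behaviour of the hyaluron ODE with convergent input:
    if c2(t) → c2* > 0 then h(t) → 1/(γ1(1 + c2*)). -/
theorem stmt19 (γ1 c2star m : ℝ) (hγ1 : 0 < γ1) (hc2star : 0 < c2star)
    (hm : 0 < m) (c2 h : ℝ → ℝ) (hc2c : Continuous c2)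
    (hc2pos : ∀ t, 0 ≤ t → m ≤ c2 t)
    (hc2lim : Tendsto c2 atTop (𝓝 c2star))
    (hbdd : ∃ C, ∀ t, 0 ≤ t → |h t| ≤ C)
    (hode : ∀ t, 0 ≤ t →
      HasDerivAt h (-γ1 * h t * c2 t + c2 t / (1 + c2 t)) t) :
    Tendsto h atTop (𝓝 (1 / (γ1 * (1 + c2star)))) := by
  obtain ⟨C, hC⟩ := hbdd
  set L : ℝ := 1 / (γ1 * (1 + c2star)) with hL
  set Lt : ℝ → ℝ := fun t => 1 / (γ1 * (1 + c2 t)) with hLt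
  have hden : γ1 * (1 + c2star) ≠ 0 := by positivity
  have hLtlim : Tendsto Lt atTop (𝓝 L) := by
    have h1 : Tendsto (fun t => γ1 * (1 + c2 t)) atTop (𝓝 (γ1 * (1 + c2star))) :=
      (hc2lim.const_add 1).const_mul γ1
    simpa [hLt, hL, one_div] using h1.inv₀ hden
  rw [Metric.tendsto_atTop]
  intro ε hε
  -- choose T with |Lt t - L| ≤ ε/8 for t ≥ T, and T ≥ 0
  obtain ⟨T₀, hT₀⟩ := Metric.tendsto_atTop.mp hLtlim (ε/8) (by positivity)
  set T : ℝ := max T₀ 0 with hT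
  have hTnn : (0:ℝ) ≤ T := le_max_right _ _
  have hLtclose : ∀ t, T ≤ t → |Lt t - L| ≤ ε/8 := by
    intro t ht
    have := hT₀ t ((le_max_left _ _).trans ht)
    rw [Real.dist_eq] at this
    linarith
  set κ : ℝ := γ1 * m * (ε/8) with hκdef
  have hκ : 0 < κ := by positivity
  -- rewrite the derivative
  have hderiv : ∀ t, 0 ≤ t →
      -γ1 * h t * c2 t + c2 t / (1 + c2 t) = -(γ1 * c2 t) * (h t - Lt t) := by
    intro t ht
    have h1 : 0 < 1 + c2 t := by linarith [hc2pos t ht]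
    simp only [hLt]
    field_simp
    ring
  -- upper bound part
  have hup : ∀ᶠ t in atTop, h t - L ≤ ε/4 := by
    apply decay_aux (fun t => h t - L)
      (fun t => -γ1 * h t * c2 t + c2 t / (1 + c2 t)) T κ (ε/4) (-C - |L|) hκ
    · intro t ht
      exact ((hode t (hTnn.trans ht)).sub_const L)
    · intro t ht hge
      have htnn : (0:ℝ) ≤ t := hTnn.trans ht
      rw [hderiv t htnn]
      have h1 : γ1 * m ≤ γ1 * c2 t := by
        have := hc2pos t htnn
        nlinarith
      have h2 : ε/8 ≤ h t - Lt t := by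
        have := hLtclose t ht
        have := abs_le.mp this
        linarith
      have h3 : 0 < γ1 * m := by positivity
      nlinarith
    · intro t ht
      have := hC t (hTnn.trans ht)
      have := abs_le.mp this
      have := abs_nonneg L
      have := le_abs_self L
      have := neg_abs_le L
      linarith
  -- lower bound part
  have hdown : ∀ᶠ t in atTop, L - h t ≤ ε/4 := by
    apply decay_aux (fun t => L - h t)
      (fun t => -(-γ1 * h t * c2 t + c2 t / (1 + c2 t))) T κ (ε/4) (-C - |L|) hκ
    · intro t ht
      exact ((hode t (hTnn.trans ht)).const_sub L)
    · intro t ht hge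
      have htnn : (0:ℝ) ≤ t := hTnn.trans ht
      rw [hderiv t htnn]
      have h1 : γ1 * m ≤ γ1 * c2 t := by
        have := hc2pos t htnn
        nlinarith
      have h2 : ε/8 ≤ Lt t - h t := by
        have := hLtclose t ht
        have := abs_le.mp this
        linarith
      have h3 : 0 < γ1 * m := by positivity
      nlinarith
    · intro t ht
      have := hC t (hTnn.trans ht)
      have := abs_le.mp this
      have := le_abs_self L
      have := neg_abs_le L
      linarith
  obtain ⟨N₁, hN₁⟩ := eventually_atTop.mp hup
  obtain ⟨N₂, hN₂⟩ := eventually_atTop.mp hdown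
  refine ⟨max N₁ N₂, fun t ht => ?_⟩
  have h1 := hN₁ t ((le_max_left _ _).trans ht)
  have h2 := hN₂ t ((le_max_right _ _).trans ht)
  rw [Real.dist_eq, abs_sub_lt_iff]
  constructor <;> linarith
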